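/- arXiv:1912.08970 — 2 statements merged into one kernel-verified Lean document; each statement's English description precedes it below -/
import Mathlib

section
/- Let C be a triangulated category and A ⊆ C a full triangulated subcategory such that for every object X of C there is a distinguished triangle Y → X → Z with Y ∈ A and Z ∈ A⊥. Then the inclusion A → C admits a right adjoint, given on objects by X ↦ Y. -/
open CategoryTheory Limits Pretriangulated

universe v u

lemma BK_bijective
    {C : Type u} [Category.{v} C] [HasZeroObject C] [Preadditive C]
    [HasShift C ℤ] [∀ n : ℤ, (shiftFunctor C n).Additive] [Pretriangulated C]
    (P : C → Prop)
    (hshift : ∀ (n : ℤ) (X : C), P X → P (X⟦n⟧))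
    {Y X Z : C} (f : Y ⟶ X) (g : X ⟶ Z) (w : Z ⟶ Y⟦(1 : ℤ)⟧)
    (hT : Triangle.mk f g w ∈ distTriang C)
    (hZ : ∀ W, P W → ∀ u : W ⟶ Z, u = 0)
    {W : C} (hW : P W) :
    Function.Bijective (fun u : W ⟶ Y => u ≫ f) := by
  constructor
  · intro u₁ u₂ hu
    simp only at hu
    have h12 : (u₁ - u₂) ≫ f = 0 := by
      rw [Preadditive.sub_comp, hu, sub_self]
    -- use the inverse rotation: obj₂ = Y, mor₂ = f
    obtain ⟨v, hv⟩ := Triangle.coyoneda_exact₂ _ (inv_rot_of_distTriang _ hT) (u₁ - u₂) h12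
    -- v : W ⟶ Z⟦(-1)⟧
    have hv0 : v = 0 := by
      have : v⟦(1 : ℤ)⟧' ≫ (shiftFunctorCompIsoId C (-1 : ℤ) 1 (by omega)).hom.app Z = 0 :=
        hZ _ (hshift 1 W hW) _
      have hv1 : v⟦(1 : ℤ)⟧' = 0 := by
        exact (cancel_mono ((shiftFunctorCompIsoId C (-1 : ℤ) 1 (by omega)).hom.app Z)).1
          (this.trans zero_comp.symm)
      exact (shiftFunctor C (1 : ℤ)).map_injective (by rw [hv1, Functor.map_zero])
    rw [hv0, zero_comp] at hv
    exact sub_eq_zero.1 hv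
  · intro v
    have hvg : v ≫ g = 0 := hZ _ hW _
    obtain ⟨u, hu⟩ := Triangle.coyoneda_exact₂ _ hT v hvg
    exact ⟨u, hu.symm⟩

/-- Bondal–Kapranov: if `A` (with object class `P`, closed under isomorphisms and shifts)
is a full triangulated subcategory of a (pre)triangulated category `C` such that every
`X : C` fits in a distinguished triangle `Y ⟶ X ⟶ Z ⟶ Y[1]` with `Y ∈ A` and
`Z ∈ A^⊥`, then the inclusion `A ⥤ C` admits a right adjoint `R`, given on objects by
`X ↦ Y`. -/
theorem inclusion_has_right_adjoint_of_triangles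
    {C : Type u} [Category.{v} C] [HasZeroObject C] [Preadditive C]
    [HasShift C ℤ] [∀ n : ℤ, (shiftFunctor C n).Additive] [Pretriangulated C]
    (P : C → Prop)
    (hiso : ∀ {X Y : C}, (X ≅ Y) → P X → P Y)
    (hshift : ∀ (n : ℤ) (X : C), P X → P (X⟦n⟧))
    (h : ∀ X : C, ∃ (Y Z : C) (f : Y ⟶ X) (g : X ⟶ Z) (w : Z ⟶ Y⟦(1 : ℤ)⟧),
      (Triangle.mk f g w ∈ distTriang C) ∧ P Y ∧ (∀ W, P W → ∀ u : W ⟶ Z, u = 0)) :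
    ∃ (R : C ⥤ ObjectProperty.FullSubcategory P) (_ : ObjectProperty.ι P ⊣ R),
      ∀ (X Y Z : C) (f : Y ⟶ X) (g : X ⟶ Z) (w : Z ⟶ Y⟦(1 : ℤ)⟧),
        (Triangle.mk f g w ∈ distTriang C) → P Y →
        (∀ W, P W → ∀ u : W ⟶ Z, u = 0) →
        Nonempty ((R.obj X).obj ≅ Y) := by
  classical
  -- choose the data for each X
  choose Y Z f g w hT hPY hZ using h
  let Gobj : C → ObjectProperty.FullSubcategory P := fun X => ⟨Y X, hPY X⟩
  -- the hom-equivalence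
  let Φ : ∀ (W : ObjectProperty.FullSubcategory P) (X : C),
      (W ⟶ Gobj X) ≃ ((ObjectProperty.ι P).obj W ⟶ X) :=
    fun W X => Equiv.ofBijective (fun u => (ObjectProperty.ι P).map u ≫ f X)
      ((BK_bijective P hshift (f X) (g X) (w X) (hT X) (hZ X) W.2).comp
          (InducedCategory.homEquiv : (W ⟶ Gobj X) ≃ _).bijective)
  let e : ∀ (W : ObjectProperty.FullSubcategory P) (X : C),
      ((ObjectProperty.ι P).obj W ⟶ X) ≃ (W ⟶ Gobj X) :=
    fun W X => (Φ W X).symm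
  have he : ∀ (W' W : ObjectProperty.FullSubcategory P) (X : C) (q : W' ⟶ W)
      (v : (ObjectProperty.ι P).obj W ⟶ X),
      e W' X ((ObjectProperty.ι P).map q ≫ v) = q ≫ e W X v := by
    intro W' W X q v
    apply (Φ W' X).injective
    show (Φ W' X) ((Φ W' X).symm ((ObjectProperty.ι P).map q ≫ v))
      = (Φ W' X) (q ≫ (Φ W X).symm v)
    rw [Equiv.apply_symm_apply]
    show (ObjectProperty.ι P).map q ≫ v
      = (ObjectProperty.ι P).map (q ≫ (Φ W X).symm v) ≫ f X
    rw [Functor.map_comp, Category.assoc]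
    congr 1
    show v = (Φ W X) ((Φ W X).symm v)
    rw [Equiv.apply_symm_apply]
  refine ⟨Adjunction.rightAdjointOfEquiv e he, Adjunction.adjunctionOfEquivRight e he,
    ?_⟩
  intro X Y' Z' f' g' w' hT' hPY' hZ'
  -- both Y X and Y' corepresent the same restricted functor
  have b1 := BK_bijective P hshift (f X) (g X) (w X) (hT X) (hZ X) hPY'
  have b2 := BK_bijective P hshift f' g' w' hT' hZ' (hPY X)
  obtain ⟨u, hu⟩ := b1.2 f'          -- u : Y' ⟶ Y X, u ≫ f X = f'
  obtain ⟨v, hv⟩ := b2.2 (f X)       -- v : Y X ⟶ Y', v ≫ f' = f X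
  have hu' : u ≫ f X = f' := hu
  have hv' : v ≫ f' = f X := hv
  refine ⟨⟨v, u, ?_, ?_⟩⟩
  · apply (BK_bijective P hshift (f X) (g X) (w X) (hT X) (hZ X) (hPY X)).1
    show (v ≫ u) ≫ f X = 𝟙 (Y X) ≫ f X
    rw [Category.id_comp, Category.assoc, hu', hv']
  · apply (BK_bijective P hshift f' g' w' hT' hZ' hPY').1
    show (u ≫ v) ≫ f' = 𝟙 Y' ≫ f'
    rw [Category.id_comp, Category.assoc, hv', hu']
end

section
/- Let C be a triangulated category, A ⊆ C a full triangulated subcategory whose inclusion admits a right adjoint R. Then the composite functor A⊥ → C → C/A from the right orthogonal to the Verdier quotient is an equivalence of categories. -/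
open CategoryTheory Limits Pretriangulated

universe v v' u u'

/-- Let `C` be a (pre)triangulated category and `A` a thick full triangulated subcategory
(object class `P`, closed under isomorphisms, shifts, extensions and retracts) whose
inclusion admits a right adjoint `R`.  Let `L : C ⥤ D` be the Verdier quotient of `C`
by `A`, i.e. the localization at the class of morphisms whose cone lies in `A`.  Then the
composite `A^⊥ ⥤ C ⥤ C/A` of the inclusion of the right orthogonal with the quotient
functor is an equivalence of categories. -/
theorem orthogonal_to_verdier_quotient_is_equivalence
    {C : Type u} [Category.{v} C] [HasZeroObject C] [Preadditive C]
    [HasShift C ℤ] [∀ n : ℤ, (shiftFunctor C n).Additive] [Pretriangulated C]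
    (P : C → Prop)
    (hiso : ∀ {X Y : C}, (X ≅ Y) → P X → P Y)
    (hshift : ∀ (n : ℤ) (X : C), P X → P (X⟦n⟧))
    (hext : ∀ T : Triangle C, (T ∈ distTriang C) → P T.obj₁ → P T.obj₃ → P T.obj₂)
    (hretract : ∀ (X Y : C) (s : X ⟶ Y) (p : Y ⟶ X), s ≫ p = 𝟙 X → P Y → P X)
    (R : C ⥤ ObjectProperty.FullSubcategory P) (adj : ObjectProperty.ι P ⊣ R)
    {D : Type u'} [Category.{v'} D] (L : C ⥤ D)
    (hL : L.IsLocalization (fun (X Y : C) (f : X ⟶ Y) =>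
      ∃ (Z : C) (g : Y ⟶ Z) (w : Z ⟶ X⟦(1 : ℤ)⟧),
        (Triangle.mk f g w ∈ distTriang C) ∧ P Z)) :
    (ObjectProperty.ι
        (fun X : C => ∀ (Y : C), P Y → ∀ f : Y ⟶ X, f = 0) ⋙ L).IsEquivalence := by
  classical
  set P' : C → Prop := fun X : C => ∀ (Y : C), P Y → ∀ f : Y ⟶ X, f = 0 with hP'def
  set W : MorphismProperty C := fun (X Y : C) (f : X ⟶ Y) =>
      ∃ (Z : C) (g : Y ⟶ Z) (w : Z ⟶ X⟦(1 : ℤ)⟧),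
        (Triangle.mk f g w ∈ distTriang C) ∧ P Z with hWdef
  have hL' : L.IsLocalization W := hL
  -- P' is closed under shifts
  have hP'shift : ∀ (n : ℤ) (Z : C), P' Z → P' (Z⟦n⟧) := by
    intro n Z hZ a ha f
    have adjn := (shiftEquiv' C (-n) n (by omega)).toAdjunction
    have h0 : (adjn.homEquiv a Z).symm f = 0 := hZ _ (hshift (-n) a ha) _
    have hf : f = adjn.homEquiv a Z ((adjn.homEquiv a Z).symm f) :=
      (Equiv.apply_symm_apply _ _).symm
    rw [hf, h0, Adjunction.homEquiv_unit, Functor.map_zero, Limits.comp_zero]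
    rfl
  -- postcomposition with the counit is bijective on maps from objects of `A`
  have hcounit : ∀ (X : C) (a : C) (ha : P a), Function.Bijective
      (fun (χ : a ⟶ (ObjectProperty.ι P).obj (R.obj X)) => χ ≫ adj.counit.app X) := by
    intro X a ha
    have heq : (fun (χ : a ⟶ (ObjectProperty.ι P).obj (R.obj X)) =>
        χ ≫ adj.counit.app X)
        = fun χ => (adj.homEquiv (⟨a, ha⟩ : ObjectProperty.FullSubcategory P) X).symm (ObjectProperty.homMk χ) := by
      funext χ
      rw [Adjunction.homEquiv_counit]
      rfl
    rw [heq]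
    exact (adj.homEquiv _ _).symm.bijective.comp
      ⟨fun _ _ h => congrArg InducedCategory.Hom.hom h, ObjectProperty.homMk_surjective⟩
  -- every object admits a reflection into the right orthogonal
  have refl : ∀ X : C, ∃ (Z : C) (p : X ⟶ Z), P' Z ∧ W p := by
    intro X
    obtain ⟨Z, p, w, ht⟩ := Pretriangulated.distinguished_cocone_triangle (adj.counit.app X)
    refine ⟨Z, p, ?_, ?_⟩
    · intro a ha φ
      have h31 := Pretriangulated.comp_distTriang_mor_zero₃₁ _ ht
      have h12 := Pretriangulated.comp_distTriang_mor_zero₁₂ _ ht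
      simp only [Triangle.mk_obj₁, Triangle.mk_obj₂, Triangle.mk_obj₃, Triangle.mk_mor₁, Triangle.mk_mor₂, Triangle.mk_mor₃] at h31 h12
      have h1 : φ ≫ w = 0 := by
        have adj1 := (shiftEquiv' C (-1 : ℤ) 1 (by omega)).toAdjunction
        have key := Adjunction.homEquiv_naturality_right_symm adj1
          (φ ≫ w) (adj.counit.app X)
        dsimp only [shiftEquiv'] at key
        have hz : (φ ≫ w) ≫ (shiftFunctor C (1 : ℤ)).map (adj.counit.app X) = 0 := by
          erw [Category.assoc, h31, Limits.comp_zero]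
        rw [hz] at key
        have hχ : (adj1.homEquiv a _).symm (φ ≫ w) = 0 :=
          (hcounit X ((shiftFunctor C (-1 : ℤ)).obj a) (hshift _ _ ha)).1
            (by
              have k0 : (adj1.homEquiv a ((𝟭 C).obj X)).symm 0 = 0 := by
                rw [Adjunction.homEquiv_counit]
                dsimp only [shiftEquiv']
                erw [Functor.map_zero, Limits.zero_comp]
                rfl
              exact (key.symm.trans k0).trans Limits.zero_comp.symm)
        have hfw : φ ≫ w = (adj1.homEquiv a _) ((adj1.homEquiv a _).symm (φ ≫ w)) :=
          (Equiv.apply_symm_apply _ _).symm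
        rw [hfw, hχ, Adjunction.homEquiv_unit, Functor.map_zero, Limits.comp_zero]
        rfl
      obtain ⟨β, hβ⟩ := Triangle.coyoneda_exact₃ _ ht φ h1
      obtain ⟨γ, hγ⟩ := (hcounit X a ha).2 β
      simp only [Triangle.mk_obj₁, Triangle.mk_obj₂, Triangle.mk_obj₃, Triangle.mk_mor₁, Triangle.mk_mor₂, Triangle.mk_mor₃] at hγ hβ
      erw [hβ, ← hγ, Category.assoc, h12, Limits.comp_zero]
      rfl
    · exact ⟨_, w, -((adj.counit.app X)⟦(1 : ℤ)⟧'),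
        Pretriangulated.rot_of_distTriang _ ht,
        hshift 1 _ (R.obj X).property⟩
  -- morphisms in `W` induce bijections on maps into the right orthogonal
  have hWbij : ∀ {X Y : C} (f : X ⟶ Y), W f → ∀ Z : C, P' Z →
      Function.Bijective (fun (u : Y ⟶ Z) => f ≫ u) := by
    rintro X Y f ⟨Zc, g, w, ht, hZc⟩ Z hZ
    constructor
    · intro u v huv
      dsimp at huv
      have h0 : f ≫ (u - v) = 0 := by
        rw [Preadditive.comp_sub, huv, sub_self]
      obtain ⟨q, hq⟩ := Triangle.yoneda_exact₂ _ ht (u - v) h0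
      have hq0 : q = 0 := hZ _ hZc q
      rw [hq0, Limits.comp_zero] at hq
      exact sub_eq_zero.1 hq
    · intro u
      have ht' := Pretriangulated.inv_rot_of_distTriang _ ht
      obtain ⟨v, hv⟩ := Triangle.yoneda_exact₂ _ ht' u
        (hZ _ (hshift (-1) _ hZc) _)
      exact ⟨v, hv.symm⟩
  -- `W` coincides with the left Bousfield class of `P'`
  have hW_eq : W = ObjectProperty.isLocal P' := by
    ext X Y f
    constructor
    · intro hf Z hZ
      exact hWbij f hf Z hZ
    · intro hf
      obtain ⟨Zc, g, w, ht⟩ := Pretriangulated.distinguished_cocone_triangle f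
      refine ⟨Zc, g, w, ht, ?_⟩
      have hzero : ∀ Z : C, P' Z → ∀ u : Zc ⟶ Z, u = 0 := by
        intro Z hZ u
        have h12 := Pretriangulated.comp_distTriang_mor_zero₁₂ _ ht
        simp only [Triangle.mk_obj₁, Triangle.mk_obj₂, Triangle.mk_obj₃, Triangle.mk_mor₁, Triangle.mk_mor₂, Triangle.mk_mor₃] at h12
        have h1 : g ≫ u = 0 := by
          apply (hf Z hZ).1
          dsimp
          erw [← Category.assoc, h12, Limits.zero_comp, Limits.comp_zero]
        obtain ⟨v, hv⟩ := Triangle.yoneda_exact₃ _ ht u h1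
        simp only [Triangle.mk_obj₁, Triangle.mk_obj₂, Triangle.mk_obj₃, Triangle.mk_mor₁, Triangle.mk_mor₂, Triangle.mk_mor₃] at hv
        have adj1 := (shiftEquiv' C (1 : ℤ) (-1) (by omega)).toAdjunction
        obtain ⟨v', hv'⟩ := (hf _ (hP'shift (-1) Z hZ)).2 (adj1.homEquiv X Z v)
        dsimp at hv'
        have hvv : v = f⟦(1 : ℤ)⟧' ≫ (adj1.homEquiv Y Z).symm v' := by
          have hnat := Adjunction.homEquiv_naturality_left_symm adj1 f v'
          dsimp only [shiftEquiv'] at hnat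
          rw [hv'] at hnat
          erw [Equiv.symm_apply_apply] at hnat
          exact hnat
        have h31 := Pretriangulated.comp_distTriang_mor_zero₃₁ _ ht
        simp only [Triangle.mk_obj₁, Triangle.mk_obj₂, Triangle.mk_obj₃, Triangle.mk_mor₁, Triangle.mk_mor₂, Triangle.mk_mor₃] at h31
        erw [hv, hvv, ← Category.assoc, h31]
        exact Limits.zero_comp
      obtain ⟨Q, q, hQ, hWq⟩ := refl Zc
      have hq0 : q = 0 := hzero Q hQ q
      obtain ⟨Zc', g', w', ht', hZc'⟩ := hWq
      rw [hq0] at ht'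
      have htrot := Pretriangulated.rot_of_distTriang _ ht'
      obtain ⟨s, hs⟩ := Triangle.coyoneda_exact₃ _ htrot (𝟙 (Zc⟦(1 : ℤ)⟧)) (by
        simp only [Triangle.rotate_mor₃, Triangle.mk_mor₁]
        erw [Functor.map_zero, neg_zero, Limits.comp_zero])
      have hPZc1 : P (Zc⟦(1 : ℤ)⟧) := hretract _ _ s w' hs.symm hZc'
      exact hiso ((shiftFunctorCompIsoId C (1 : ℤ) (-1) (by omega)).app Zc)
        (hshift (-1) _ hPZc1)
  -- build the left adjoint to the inclusion of the right orthogonal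
  choose Qobj pmap hQP' hQW using refl
  let j := ObjectProperty.ι P'
  let e : ∀ (X : C) (Y : ObjectProperty.FullSubcategory P'),
      ((⟨Qobj X, hQP' X⟩ : ObjectProperty.FullSubcategory P') ⟶ Y) ≃ (X ⟶ j.obj Y) :=
    fun X Y => (ObjectProperty.fullyFaithfulι P').homEquiv.trans
        (Equiv.ofBijective _ (hWbij (pmap X) (hQW X) Y.obj Y.property))
  have he : ∀ (X : C) (Y Y' : ObjectProperty.FullSubcategory P') (g : Y ⟶ Y')
      (h : (⟨Qobj X, hQP' X⟩ : ObjectProperty.FullSubcategory P') ⟶ Y),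
      e X Y' (h ≫ g) = e X Y h ≫ j.map g := by
    intro X Y Y' g h
    exact (Category.assoc _ _ _).symm
  let Qf : C ⥤ ObjectProperty.FullSubcategory P' := Adjunction.leftAdjointOfEquiv e he
  let adjQ : Qf ⊣ j := Adjunction.adjunctionOfEquivLeft e he
  have hQloc := ObjectProperty.isLocalization_isLocal adjQ
  have hrange : (fun X => X ∈ Set.range j.obj) = P' := by
    funext X
    apply propext
    constructor
    · rintro ⟨Y, rfl⟩
      exact Y.property
    · intro h
      exact ⟨⟨X, h⟩, rfl⟩
  rw [hrange, ← hW_eq] at hQloc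
  haveI := hL'
  haveI := hQloc
  let E := Localization.uniq L Qf W
  have hcomp : L ⋙ E.functor ≅ Qf := Localization.compUniqFunctor L Qf W
  haveI : IsIso adjQ.counit := adjQ.counit_isIso_of_R_fully_faithful
  have iso1 : (j ⋙ L) ⋙ E.functor ≅ 𝟭 (ObjectProperty.FullSubcategory P') :=
    (Functor.associator _ _ _) ≪≫ Functor.isoWhiskerLeft j hcomp ≪≫ asIso adjQ.counit
  haveI : ((j ⋙ L) ⋙ E.functor).IsEquivalence :=
    Functor.isEquivalence_of_iso iso1.symm
  exact Functor.isEquivalence_of_comp_right (j ⋙ L) E.functor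
end
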